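/- Let 1 < p ≤ 2 and let f, g be p-integrable vector fields on a measure space, not both vanishing μ-almost everywhere. Then (p − 1) · 2^{(p−2)/p} · (‖f‖_p^p + ‖g‖_p^p)^{(p−2)/p} · ‖g − f‖_p ≤ ‖|g|^{p−2} g − |f|^{p−2} f‖_{p'}. -/

import Mathlib

open MeasureTheory

open Real

private lemma rpow_mul_self_aux {x y : ℝ} (hx : 0 ≤ x) (hy : y ≠ 0) (hy1 : y + 1 ≠ 0) :
    x ^ y * x = x ^ (y + 1) := by
  rcases eq_or_lt_of_le hx with rfl | hx'
  · rw [zero_rpow hy, zero_rpow hy1, zero_mul]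
  · rw [Real.rpow_add_one hx'.ne' y]

private lemma rpow_sub_two_mul_self {p x : ℝ} (hp1 : 1 < p) (hp2 : p < 2) (hx : 0 ≤ x) :
    x ^ (p - 2) * x = x ^ (p - 1) := by
  have h := rpow_mul_self_aux (y := p - 2) hx (by intro h; linarith) (by intro h; linarith)
  rwa [show p - 2 + 1 = p - 1 by ring] at h

private lemma rpow_sub_one_mul_self {p x : ℝ} (hp1 : 1 < p) (hp2 : p < 2) (hx : 0 ≤ x) :
    x ^ (p - 1) * x = x ^ p := by
  have h := rpow_mul_self_aux (y := p - 1) hx (by intro h; linarith) (by intro h; linarith)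
  rwa [show p - 1 + 1 = p by ring] at h

private lemma scalar1 {p s t : ℝ} (hp1 : 1 < p) (hp2 : p < 2) (hs : 0 ≤ s) (hst : s ≤ t) :
    (p - 1) * t ^ (p - 2) * (t - s) ≤ t ^ (p - 1) - s ^ (p - 1) := by
  have ht : 0 ≤ t := hs.trans hst
  rcases eq_or_lt_of_le ht with rfl | htpos
  · have hs0 : s = 0 := le_antisymm hst hs
    subst hs0
    simp
  · have hx : -1 ≤ s / t - 1 := by
      have : 0 ≤ s / t := div_nonneg hs ht
      linarith
    have hb := rpow_one_add_le_one_add_mul_self hx (p := p - 1) (by linarith) (by linarith)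
    rw [show (1 : ℝ) + (s / t - 1) = s / t by ring] at hb
    rw [Real.div_rpow hs ht (p - 1)] at hb
    have htp : 0 < t ^ (p - 1) := Real.rpow_pos_of_pos htpos _
    have hb2 : s ^ (p - 1) ≤ (1 + (p - 1) * (s / t - 1)) * t ^ (p - 1) := by
      rw [← div_le_iff₀ htp]
      exact hb
    have h1' : t ^ (p - 1) = t ^ (p - 2) * t := (rpow_sub_two_mul_self hp1 hp2 ht).symm
    have hst' : (s / t - 1) * t = s - t := by field_simp
    have hkey : (1 + (p - 1) * (s / t - 1)) * t ^ (p - 1)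
        = t ^ (p - 1) - (p - 1) * t ^ (p - 2) * (t - s) := by
      calc (1 + (p - 1) * (s / t - 1)) * t ^ (p - 1)
          = t ^ (p - 1) + (p - 1) * ((s / t - 1) * t) * t ^ (p - 2) := by
            rw [h1']; ring
        _ = t ^ (p - 1) - (p - 1) * t ^ (p - 2) * (t - s) := by rw [hst']; ring
    rw [hkey] at hb2
    linarith

private lemma scalar2 {p s t : ℝ} (hp1 : 1 < p) (hp2 : p < 2) (hs : 0 ≤ s) (hst : s ≤ t) :
    (p - 1) * t ^ (p - 2) * (s + t) ≤ s ^ (p - 1) + t ^ (p - 1) := by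
  have ht : 0 ≤ t := hs.trans hst
  have h1 : (p - 1) * t ^ (p - 2) * t ≤ t ^ (p - 1) := by
    calc (p - 1) * t ^ (p - 2) * t = (p - 1) * (t ^ (p - 2) * t) := by ring
      _ = (p - 1) * t ^ (p - 1) := by rw [rpow_sub_two_mul_self hp1 hp2 ht]
      _ ≤ 1 * t ^ (p - 1) :=
          mul_le_mul_of_nonneg_right (by linarith) (Real.rpow_nonneg ht _)
      _ = t ^ (p - 1) := one_mul _
  have h2 : (p - 1) * t ^ (p - 2) * s ≤ s ^ (p - 1) := by
    rcases eq_or_lt_of_le hs with rfl | hspos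
    · simp [Real.zero_rpow (show p - 1 ≠ 0 by intro h; linarith)]
    · have hts : t ^ (p - 2) ≤ s ^ (p - 2) :=
        Real.rpow_le_rpow_of_nonpos hspos hst (by linarith)
      have h0 : 0 ≤ t ^ (p - 2) := Real.rpow_nonneg ht _
      calc (p - 1) * t ^ (p - 2) * s = ((p - 1) * t ^ (p - 2)) * s := by ring
        _ ≤ t ^ (p - 2) * s := mul_le_mul_of_nonneg_right (by nlinarith) hs
        _ ≤ s ^ (p - 2) * s := mul_le_mul_of_nonneg_right hts hs
        _ = s ^ (p - 1) := rpow_sub_two_mul_self hp1 hp2 hs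
  linarith

open RealInnerProductSpace in
private lemma flux_key' {E : Type*} [NormedAddCommGroup E] [InnerProductSpace ℝ E]
    {p : ℝ} (hp1 : 1 < p) (hp2 : p < 2) (a b : E) (hab : ‖a‖ ≤ ‖b‖) :
    (p - 1) * ‖b‖ ^ (p - 2) * ‖b - a‖ ^ 2
      ≤ ⟪‖b‖ ^ (p - 2) • b - ‖a‖ ^ (p - 2) • a, b - a⟫ := by
  have hs : (0:ℝ) ≤ ‖a‖ := norm_nonneg a
  have ht : (0:ℝ) ≤ ‖b‖ := norm_nonneg b
  have expand : ⟪‖b‖ ^ (p - 2) • b - ‖a‖ ^ (p - 2) • a, b - a⟫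
      = ‖b‖ ^ (p - 2) * ‖b‖ ^ 2 + ‖a‖ ^ (p - 2) * ‖a‖ ^ 2
        - (‖a‖ ^ (p - 2) + ‖b‖ ^ (p - 2)) * ⟪a, b⟫ := by
    simp only [inner_sub_left, inner_sub_right, real_inner_smul_left,
      real_inner_self_eq_norm_sq, real_inner_comm b a]
    ring
  have hns : ‖b - a‖ ^ 2 = ‖b‖ ^ 2 - 2 * ⟪a, b⟫ + ‖a‖ ^ 2 := by
    rw [norm_sub_sq_real, real_inner_comm b a]
  have hc : |⟪a, b⟫| ≤ ‖a‖ * ‖b‖ := abs_real_inner_le_norm a b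
  rw [expand, hns]
  set s := ‖a‖
  set t := ‖b‖
  set c := (⟪a, b⟫ : ℝ) with hcdef
  have eS1 : s ^ (p - 2) * s = s ^ (p - 1) := rpow_sub_two_mul_self hp1 hp2 hs
  have eT1 : t ^ (p - 2) * t = t ^ (p - 1) := rpow_sub_two_mul_self hp1 hp2 ht
  have hF1 : (p - 1) * t ^ (p - 2) * (t - s) * (t - s)
      ≤ (t ^ (p - 1) - s ^ (p - 1)) * (t - s) :=
    mul_le_mul_of_nonneg_right (scalar1 hp1 hp2 hs hab) (by linarith)
  have hF2 : (p - 1) * t ^ (p - 2) * (s + t) * (s + t)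
      ≤ (s ^ (p - 1) + t ^ (p - 1)) * (s + t) :=
    mul_le_mul_of_nonneg_right (scalar2 hp1 hp2 hs hab) (by linarith)
  have eT1t : t ^ (p - 2) * t * t = t ^ (p - 1) * t := by rw [eT1]
  have eT1s : t ^ (p - 2) * t * s = t ^ (p - 1) * s := by rw [eT1]
  have eS1s : s ^ (p - 2) * s * s = s ^ (p - 1) * s := by rw [eS1]
  have eS1t : s ^ (p - 2) * s * t = s ^ (p - 1) * t := by rw [eS1]
  have hA : (s ^ (p - 2) + t ^ (p - 2) - 2 * (p - 1) * t ^ (p - 2)) * (s * t)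
      ≤ t ^ (p - 2) * t ^ 2 + s ^ (p - 2) * s ^ 2
        - (p - 1) * t ^ (p - 2) * (t ^ 2 + s ^ 2) := by
    nlinarith [hF1, eT1t, eT1s, eS1s, eS1t]
  have hB : -((s ^ (p - 2) + t ^ (p - 2) - 2 * (p - 1) * t ^ (p - 2)) * (s * t))
      ≤ t ^ (p - 2) * t ^ 2 + s ^ (p - 2) * s ^ 2
        - (p - 1) * t ^ (p - 2) * (t ^ 2 + s ^ 2) := by
    nlinarith [hF2, eT1t, eT1s, eS1s, eS1t]
  have habs : (s ^ (p - 2) + t ^ (p - 2) - 2 * (p - 1) * t ^ (p - 2)) * c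
      ≤ t ^ (p - 2) * t ^ 2 + s ^ (p - 2) * s ^ 2
        - (p - 1) * t ^ (p - 2) * (t ^ 2 + s ^ 2) := by
    set β := s ^ (p - 2) + t ^ (p - 2) - 2 * (p - 1) * t ^ (p - 2) with hβ
    calc β * c ≤ |β * c| := le_abs_self _
      _ = |β| * |c| := abs_mul _ _
      _ ≤ |β| * (s * t) := mul_le_mul_of_nonneg_left hc (abs_nonneg β)
      _ ≤ _ := by
          rcases abs_cases β with ⟨h, _⟩ | ⟨h, _⟩ <;> rw [h]
          · exact hA
          · linarith [hB]
  linarith [habs]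

open RealInnerProductSpace in
private lemma flux_key {E : Type*} [NormedAddCommGroup E] [InnerProductSpace ℝ E]
    {p : ℝ} (hp1 : 1 < p) (hp2 : p < 2) (a b : E) :
    (p - 1) * (max ‖a‖ ‖b‖) ^ (p - 2) * ‖b - a‖ ^ 2
      ≤ ⟪‖b‖ ^ (p - 2) • b - ‖a‖ ^ (p - 2) • a, b - a⟫ := by
  rcases le_total ‖a‖ ‖b‖ with h | h
  · rw [max_eq_right h]; exact flux_key' hp1 hp2 a b h
  · have h2 := flux_key' hp1 hp2 b a h
    rw [max_eq_left h]
    rw [show a - b = -(b - a) from (neg_sub b a).symm,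
      show ‖a‖ ^ (p - 2) • a - ‖b‖ ^ (p - 2) • b
        = -(‖b‖ ^ (p - 2) • b - ‖a‖ ^ (p - 2) • a) from (neg_sub _ _).symm,
      inner_neg_neg, norm_neg] at h2
    exact h2

private lemma flux_ptwise {E : Type*} [NormedAddCommGroup E] [InnerProductSpace ℝ E]
    {p : ℝ} (hp1 : 1 < p) (hp2 : p < 2) (a b : E) :
    (p - 1) * (2:ℝ) ^ ((p - 2) / p) * (‖a‖ ^ p + ‖b‖ ^ p) ^ ((p - 2) / p) * ‖b - a‖
      ≤ ‖‖b‖ ^ (p - 2) • b - ‖a‖ ^ (p - 2) • a‖ := by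
  by_cases hba : b = a
  · rw [hba, sub_self, norm_zero, mul_zero]
    exact norm_nonneg _
  · have hd : (0:ℝ) < ‖b - a‖ := by
      rw [norm_pos_iff]
      exact sub_ne_zero.mpr hba
    set m := max ‖a‖ ‖b‖ with hm
    have hm0 : 0 < m := by
      rcases (le_trans (norm_nonneg a) (le_max_left ‖a‖ ‖b‖)).lt_or_eq with h | h
      · exact h
      · exfalso
        have ha0 : a = 0 := norm_eq_zero.mp (le_antisymm
          (h ▸ le_max_left ‖a‖ ‖b‖) (norm_nonneg a))
        have hb0 : b = 0 := norm_eq_zero.mp (le_antisymm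
          (h ▸ le_max_right ‖a‖ ‖b‖) (norm_nonneg b))
        exact hba (hb0.trans ha0.symm)
    have h1 : (p - 1) * m ^ (p - 2) * ‖b - a‖
        ≤ ‖‖b‖ ^ (p - 2) • b - ‖a‖ ^ (p - 2) • a‖ := by
      have hk := (flux_key hp1 hp2 a b).trans
        (real_inner_le_norm (‖b‖ ^ (p - 2) • b - ‖a‖ ^ (p - 2) • a) (b - a))
      rw [pow_two] at hk
      exact le_of_mul_le_mul_right (by linarith [hk]) hd
    have he : (p - 2) / p ≤ 0 :=
      div_nonpos_of_nonpos_of_nonneg (by linarith) (by linarith)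
    have hsum : m ^ p ≤ ‖a‖ ^ p + ‖b‖ ^ p := by
      rcases max_cases ‖a‖ ‖b‖ with ⟨h, _⟩ | ⟨h, _⟩ <;> rw [hm, h]
      · have := Real.rpow_nonneg (norm_nonneg b) p; linarith
      · have := Real.rpow_nonneg (norm_nonneg a) p; linarith
    have h2 : (‖a‖ ^ p + ‖b‖ ^ p) ^ ((p - 2) / p) ≤ m ^ (p - 2) := by
      have hmp : 0 < m ^ p := Real.rpow_pos_of_pos hm0 p
      have h' := Real.rpow_le_rpow_of_nonpos hmp hsum he
      rwa [← Real.rpow_mul hm0.le, show p * ((p - 2) / p) = p - 2 by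
        field_simp] at h'
    have h3 : (2:ℝ) ^ ((p - 2) / p) ≤ 1 :=
      Real.rpow_le_one_of_one_le_of_nonpos one_le_two he
    calc (p - 1) * (2:ℝ) ^ ((p - 2) / p) * (‖a‖ ^ p + ‖b‖ ^ p) ^ ((p - 2) / p) * ‖b - a‖
        ≤ (p - 1) * 1 * (m ^ (p - 2)) * ‖b - a‖ := by
          gcongr <;> first
            | exact h3
            | exact h2
            | linarith
            | positivity
      _ = (p - 1) * m ^ (p - 2) * ‖b - a‖ := by ring
      _ ≤ _ := h1

private lemma add_rpow_le_two_rpow {x y r : ℝ} (hx : 0 ≤ x) (hy : 0 ≤ y) (hr : 0 ≤ r) :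
    (x + y) ^ r ≤ 2 ^ r * (x ^ r + y ^ r) := by
  rcases le_total x y with h | h
  · calc (x + y) ^ r ≤ (2 * y) ^ r :=
        Real.rpow_le_rpow (by positivity) (by linarith) hr
      _ = 2 ^ r * y ^ r := Real.mul_rpow (by norm_num) hy
      _ ≤ 2 ^ r * (x ^ r + y ^ r) :=
        mul_le_mul_of_nonneg_left
          (le_add_of_nonneg_left (Real.rpow_nonneg hx r)) (Real.rpow_nonneg (by norm_num) r)
  · calc (x + y) ^ r ≤ (2 * x) ^ r :=
        Real.rpow_le_rpow (by positivity) (by linarith) hr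
      _ = 2 ^ r * x ^ r := Real.mul_rpow (by norm_num) hx
      _ ≤ 2 ^ r * (x ^ r + y ^ r) :=
        mul_le_mul_of_nonneg_left
          (le_add_of_nonneg_right (Real.rpow_nonneg hy r)) (Real.rpow_nonneg (by norm_num) r)

private lemma integrable_of_lintegral_lt_top {Ω : Type*} [MeasurableSpace Ω] {μ : Measure Ω}
    {u : Ω → ℝ} (hm : Measurable u) (hu : ∀ x, 0 ≤ u x)
    (hfin : ∫⁻ x, ENNReal.ofReal (u x) ∂μ < ⊤) : Integrable u μ := by
  refine ⟨hm.aestronglyMeasurable, ?_⟩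
  rw [hasFiniteIntegral_iff_norm]
  have : ∀ x, ENNReal.ofReal ‖u x‖ = ENNReal.ofReal (u x) := fun x => by
    rw [Real.norm_of_nonneg (hu x)]
  simp only [this]
  exact hfin

private lemma memℒp_of_integrable_rpow {Ω : Type*} [MeasurableSpace Ω] {μ : Measure Ω}
    {u : Ω → ℝ} (hm : Measurable u) (hu : ∀ x, 0 ≤ u x) {r : ℝ} (hr : 1 ≤ r)
    (hi : Integrable (fun x => u x ^ r) μ) : MemLp u (ENNReal.ofReal r) μ := by
  have hr0 : (0:ℝ) < r := lt_of_lt_of_le one_pos hr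
  have hq0 : (ENNReal.ofReal r) ≠ 0 := by
    simp only [ne_eq, ENNReal.ofReal_eq_zero, not_le]
    exact hr0
  have hiff := memLp_norm_rpow_iff (μ := μ) (q := ENNReal.ofReal r) (p := ENNReal.ofReal r)
    hm.aestronglyMeasurable hq0 ENNReal.ofReal_ne_top
  rw [ENNReal.div_self hq0 ENNReal.ofReal_ne_top] at hiff
  refine hiff.mp ?_
  rw [memLp_one_iff_integrable]
  refine hi.congr (Filter.Eventually.of_forall fun x => ?_)
  simp [ENNReal.toReal_ofReal hr0.le, Real.norm_eq_abs, abs_of_nonneg (hu x)]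


/-- Inverse flux deviation estimate for `1 < p ≤ 2`:
`(p-1) 2^{(p-2)/p} (‖f‖_p^p + ‖g‖_p^p)^{(p-2)/p} ‖g - f‖_p ≤ ‖ |g|^{p-2} g - |f|^{p-2} f ‖_{p'}`. -/
theorem flux_deviation_inverse_p_le_two
    (p : ℝ) (hp1 : 1 < p) (hp2 : p ≤ 2)
    (N : ℕ) (hN : 1 ≤ N)
    {Ω : Type*} [MeasurableSpace Ω] (μ : Measure Ω)
    (f g : Ω → EuclideanSpace ℝ (Fin N))
    (hfm : Measurable f) (hgm : Measurable g)
    (hfp : ∫⁻ x, ENNReal.ofReal (‖f x‖ ^ p) ∂μ < ⊤)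
    (hgp : ∫⁻ x, ENNReal.ofReal (‖g x‖ ^ p) ∂μ < ⊤)
    (hne : ¬(f =ᵐ[μ] 0 ∧ g =ᵐ[μ] 0)) :
    (p - 1) * (2 : ℝ) ^ ((p - 2) / p)
        * ((∫ x, ‖f x‖ ^ p ∂μ) + ∫ x, ‖g x‖ ^ p ∂μ) ^ ((p - 2) / p)
        * (∫ x, ‖g x - f x‖ ^ p ∂μ) ^ (1 / p)
      ≤ (∫ x, ‖‖g x‖ ^ (p - 2) • g x - ‖f x‖ ^ (p - 2) • f x‖ ^ (p / (p - 1)) ∂μ)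
          ^ (1 / (p / (p - 1))) := by
  by_cases hp2e : p = 2
  · subst hp2e
    norm_num
  · have hp2' : p < 2 := lt_of_le_of_ne hp2 hp2e
    have hp0 : (0:ℝ) < p := by linarith
    have hp1' : (0:ℝ) < p - 1 := by linarith
    have h2p : (0:ℝ) < 2 - p := by linarith
    set q : ℝ := p / (p - 1) with hqdef
    have hq0 : 0 < q := by positivity
    have hq1 : 1 < q := by
      rw [hqdef, lt_div_iff₀ hp1']; linarith
    -- measurability
    have hfnm : Measurable fun x => ‖f x‖ := hfm.norm
    have hgnm : Measurable fun x => ‖g x‖ := hgm.norm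
    have hfpm : Measurable fun x => ‖f x‖ ^ p := hfnm.pow measurable_const
    have hgpm : Measurable fun x => ‖g x‖ ^ p := hgnm.pow measurable_const
    have hUm : Measurable fun x => ‖f x‖ ^ p + ‖g x‖ ^ p := hfpm.add hgpm
    have hDnm : Measurable fun x => ‖g x - f x‖ := (hgm.sub hfm).norm
    have hDm : Measurable fun x => ‖g x - f x‖ ^ p := hDnm.pow measurable_const
    have hΦm : Measurable fun x => ‖g x‖ ^ (p - 2) • g x - ‖f x‖ ^ (p - 2) • f x :=
      ((hgnm.pow measurable_const).smul hgm).sub ((hfnm.pow measurable_const).smul hfm)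
    have hHm : Measurable
        fun x => ‖‖g x‖ ^ (p - 2) • g x - ‖f x‖ ^ (p - 2) • f x‖ ^ q :=
      hΦm.norm.pow measurable_const
    -- integrability
    have hfi : Integrable (fun x => ‖f x‖ ^ p) μ :=
      integrable_of_lintegral_lt_top hfpm (fun x => Real.rpow_nonneg (norm_nonneg _) p) hfp
    have hgi : Integrable (fun x => ‖g x‖ ^ p) μ :=
      integrable_of_lintegral_lt_top hgpm (fun x => Real.rpow_nonneg (norm_nonneg _) p) hgp
    have hUi : Integrable (fun x => ‖f x‖ ^ p + ‖g x‖ ^ p) μ := hfi.add hgi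
    have hDi : Integrable (fun x => ‖g x - f x‖ ^ p) μ := by
      refine Integrable.mono (hUi.const_mul (2 ^ p)) hDm.aestronglyMeasurable
        (Filter.Eventually.of_forall fun x => ?_)
      rw [Real.norm_of_nonneg (Real.rpow_nonneg (norm_nonneg _) p)]
      calc ‖g x - f x‖ ^ p ≤ (‖f x‖ + ‖g x‖) ^ p := by
            refine Real.rpow_le_rpow (norm_nonneg _) ?_ hp0.le
            rw [add_comm]
            exact norm_sub_le _ _
        _ ≤ 2 ^ p * (‖f x‖ ^ p + ‖g x‖ ^ p) :=
            add_rpow_le_two_rpow (norm_nonneg _) (norm_nonneg _) hp0.le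
        _ ≤ ‖2 ^ p * (‖f x‖ ^ p + ‖g x‖ ^ p)‖ := le_abs_self _
    have hnormΦ : ∀ v : EuclideanSpace ℝ (Fin N), ‖(‖v‖ ^ (p - 2)) • v‖ = ‖v‖ ^ (p - 1) :=
      fun v => by
        rw [norm_smul, Real.norm_of_nonneg (Real.rpow_nonneg (norm_nonneg v) _),
          rpow_sub_two_mul_self hp1 hp2' (norm_nonneg v)]
    have hHle : ∀ x, ‖‖g x‖ ^ (p - 2) • g x - ‖f x‖ ^ (p - 2) • f x‖ ^ q
        ≤ 2 ^ q * (‖f x‖ ^ p + ‖g x‖ ^ p) := fun x => by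
      have e1 : ((‖f x‖ ^ (p - 1)) ^ q) = ‖f x‖ ^ p := by
        rw [← Real.rpow_mul (norm_nonneg _), show (p - 1) * q = p by
          rw [hqdef]; field_simp]
      have e2 : ((‖g x‖ ^ (p - 1)) ^ q) = ‖g x‖ ^ p := by
        rw [← Real.rpow_mul (norm_nonneg _), show (p - 1) * q = p by
          rw [hqdef]; field_simp]
      calc ‖‖g x‖ ^ (p - 2) • g x - ‖f x‖ ^ (p - 2) • f x‖ ^ q
          ≤ (‖f x‖ ^ (p - 1) + ‖g x‖ ^ (p - 1)) ^ q := by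
            refine Real.rpow_le_rpow (norm_nonneg _) ?_ hq0.le
            calc ‖‖g x‖ ^ (p - 2) • g x - ‖f x‖ ^ (p - 2) • f x‖
                ≤ ‖‖g x‖ ^ (p - 2) • g x‖ + ‖‖f x‖ ^ (p - 2) • f x‖ := norm_sub_le _ _
              _ = ‖f x‖ ^ (p - 1) + ‖g x‖ ^ (p - 1) := by
                  rw [hnormΦ, hnormΦ]; ring
        _ ≤ 2 ^ q * ((‖f x‖ ^ (p - 1)) ^ q + (‖g x‖ ^ (p - 1)) ^ q) :=
            add_rpow_le_two_rpow (Real.rpow_nonneg (norm_nonneg _) _)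
              (Real.rpow_nonneg (norm_nonneg _) _) hq0.le
        _ = 2 ^ q * (‖f x‖ ^ p + ‖g x‖ ^ p) := by rw [e1, e2]
    have hHi : Integrable
        (fun x => ‖‖g x‖ ^ (p - 2) • g x - ‖f x‖ ^ (p - 2) • f x‖ ^ q) μ := by
      refine Integrable.mono (hUi.const_mul (2 ^ q)) hHm.aestronglyMeasurable
        (Filter.Eventually.of_forall fun x => ?_)
      rw [Real.norm_of_nonneg (Real.rpow_nonneg (norm_nonneg _) q)]
      exact (hHle x).trans (le_abs_self _)
    -- pointwise estimate
    set c0 : ℝ := (p - 1) * (2:ℝ) ^ ((p - 2) / p) with hc0def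
    have hc0 : 0 < c0 := by
      apply mul_pos hp1'
      exact Real.rpow_pos_of_pos (by norm_num) _
    set w : Ω → ℝ := fun x => (‖f x‖ ^ p + ‖g x‖ ^ p) ^ ((p - 2) / p) with hwdef
    have hw0 : ∀ x, 0 ≤ w x := fun x => Real.rpow_nonneg (by positivity) _
    have hwm : Measurable w := hUm.pow measurable_const
    have hpt : ∀ x, c0 * w x * ‖g x - f x‖
        ≤ ‖‖g x‖ ^ (p - 2) • g x - ‖f x‖ ^ (p - 2) • f x‖ := fun x => by
      have h := flux_ptwise hp1 hp2' (f x) (g x)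
      calc c0 * w x * ‖g x - f x‖
          = (p - 1) * (2:ℝ) ^ ((p - 2) / p) * (‖f x‖ ^ p + ‖g x‖ ^ p) ^ ((p - 2) / p)
            * ‖g x - f x‖ := by rw [hc0def, hwdef]
        _ ≤ _ := h
    -- Hölder
    have hconj : Real.HolderConjugate (1 / (p - 1)) (1 / (2 - p)) := by
      constructor
      · rw [one_div, one_div, inv_inv, inv_inv, inv_one]; ring
      · exact div_pos one_pos hp1'
      · exact div_pos one_pos h2p
    set φ : Ω → ℝ := fun x => (c0 * w x * ‖g x - f x‖) ^ p with hφdef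
    set ψ : Ω → ℝ := fun x => (‖f x‖ ^ p + ‖g x‖ ^ p) ^ (2 - p) with hψdef
    have hφm : Measurable φ := ((measurable_const.mul hwm).mul hDnm).pow measurable_const
    have hψm : Measurable ψ := hUm.pow measurable_const
    have hφ0 : ∀ x, 0 ≤ φ x := fun x => Real.rpow_nonneg
      (by positivity) _
    have hψ0 : ∀ x, 0 ≤ ψ x := fun x => Real.rpow_nonneg (by positivity) _
    have hbase0 : ∀ x, 0 ≤ c0 * w x * ‖g x - f x‖ := fun x => by positivity
    have hφr : ∀ x, φ x ^ (1 / (p - 1))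
        = (c0 * w x * ‖g x - f x‖) ^ q := fun x => by
      rw [hφdef, ← Real.rpow_mul (hbase0 x), show p * (1 / (p - 1)) = q by
        rw [hqdef]; field_simp]
    have hφri : Integrable (fun x => φ x ^ (1 / (p - 1))) μ := by
      refine Integrable.mono hHi
        ((hφm.pow measurable_const).aestronglyMeasurable)
        (Filter.Eventually.of_forall fun x => ?_)
      rw [Real.norm_of_nonneg (Real.rpow_nonneg (hφ0 x) _),
        Real.norm_of_nonneg (Real.rpow_nonneg (norm_nonneg _) _), hφr x]
      exact Real.rpow_le_rpow (hbase0 x) (hpt x) hq0.le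
    have hψr : ∀ x, ψ x ^ (1 / (2 - p)) = ‖f x‖ ^ p + ‖g x‖ ^ p := fun x => by
      rw [hψdef, ← Real.rpow_mul (by positivity),
        show (2 - p) * (1 / (2 - p)) = 1 by field_simp, Real.rpow_one]
    have hψri : Integrable (fun x => ψ x ^ (1 / (2 - p))) μ :=
      hUi.congr (Filter.Eventually.of_forall fun x => (hψr x).symm)
    have hφmem : MemLp φ (ENNReal.ofReal (1 / (p - 1))) μ :=
      memℒp_of_integrable_rpow hφm hφ0
        (by rw [le_div_iff₀ hp1']; linarith) hφri
    have hψmem : MemLp ψ (ENNReal.ofReal (1 / (2 - p))) μ :=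
      memℒp_of_integrable_rpow hψm hψ0
        (by rw [le_div_iff₀ h2p]; linarith) hψri
    have holder := MeasureTheory.integral_mul_le_Lp_mul_Lq_of_nonneg hconj
      (Filter.Eventually.of_forall hφ0) (Filter.Eventually.of_forall hψ0) hφmem hψmem
    -- identify left side
    have hφψ : ∀ x, φ x * ψ x = c0 ^ p * ‖g x - f x‖ ^ p := fun x => by
      by_cases hU : ‖f x‖ ^ p + ‖g x‖ ^ p = 0
      · have hf0 : ‖f x‖ ^ p = 0 := by
          have h1 := Real.rpow_nonneg (norm_nonneg (f x)) p
          have h2 := Real.rpow_nonneg (norm_nonneg (g x)) p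
          linarith
        have hg0 : ‖g x‖ ^ p = 0 := by
          have h1 := Real.rpow_nonneg (norm_nonneg (f x)) p
          linarith
        have hfx : f x = 0 := by
          have := (Real.rpow_eq_zero_iff_of_nonneg (norm_nonneg (f x))).mp hf0
          exact norm_eq_zero.mp this.1
        have hgx : g x = 0 := by
          have := (Real.rpow_eq_zero_iff_of_nonneg (norm_nonneg (g x))).mp hg0
          exact norm_eq_zero.mp this.1
        have hD0 : ‖g x - f x‖ = 0 := by rw [hfx, hgx, sub_zero, norm_zero]
        simp only [hφdef, hψdef]
        rw [hD0]
        simp [Real.zero_rpow hp0.ne']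
      · have hU' : 0 < ‖f x‖ ^ p + ‖g x‖ ^ p :=
          lt_of_le_of_ne (by positivity) (Ne.symm hU)
        have hwp : w x ^ p = (‖f x‖ ^ p + ‖g x‖ ^ p) ^ (p - 2) := by
          rw [hwdef, ← Real.rpow_mul hU'.le, show (p - 2) / p * p = p - 2 by
            field_simp]
        have hcan : (‖f x‖ ^ p + ‖g x‖ ^ p) ^ (p - 2)
            * (‖f x‖ ^ p + ‖g x‖ ^ p) ^ (2 - p) = 1 := by
          rw [← Real.rpow_add hU', show p - 2 + (2 - p) = 0 by ring, Real.rpow_zero]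
        simp only [hφdef, hψdef]
        rw [Real.mul_rpow (by positivity) (norm_nonneg _),
          Real.mul_rpow hc0.le (hw0 x), hwp]
        calc c0 ^ p * (‖f x‖ ^ p + ‖g x‖ ^ p) ^ (p - 2) * ‖g x - f x‖ ^ p
              * (‖f x‖ ^ p + ‖g x‖ ^ p) ^ (2 - p)
            = c0 ^ p * ‖g x - f x‖ ^ p
              * ((‖f x‖ ^ p + ‖g x‖ ^ p) ^ (p - 2)
                * (‖f x‖ ^ p + ‖g x‖ ^ p) ^ (2 - p)) := by ring
          _ = c0 ^ p * ‖g x - f x‖ ^ p := by rw [hcan, mul_one]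
    have hL : ∫ x, φ x * ψ x ∂μ = c0 ^ p * ∫ x, ‖g x - f x‖ ^ p ∂μ := by
      rw [show (fun x => φ x * ψ x) = fun x => c0 ^ p * ‖g x - f x‖ ^ p from
        funext hφψ]
      exact integral_const_mul _ _
    have hDp0 : 0 ≤ ∫ x, ‖g x - f x‖ ^ p ∂μ :=
      integral_nonneg fun x => Real.rpow_nonneg (norm_nonneg _) _
    have hH0 : 0 ≤ ∫ x, ‖‖g x‖ ^ (p - 2) • g x - ‖f x‖ ^ (p - 2) • f x‖ ^ q ∂μ :=
      integral_nonneg fun x => Real.rpow_nonneg (norm_nonneg _) _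
    have hA0 : 0 ≤ ∫ x, ‖f x‖ ^ p ∂μ :=
      integral_nonneg fun x => Real.rpow_nonneg (norm_nonneg _) _
    have hB0 : 0 ≤ ∫ x, ‖g x‖ ^ p ∂μ :=
      integral_nonneg fun x => Real.rpow_nonneg (norm_nonneg _) _
    have hT : 0 < (∫ x, ‖f x‖ ^ p ∂μ) + ∫ x, ‖g x‖ ^ p ∂μ := by
      rcases (by linarith :
          (0:ℝ) ≤ (∫ x, ‖f x‖ ^ p ∂μ) + ∫ x, ‖g x‖ ^ p ∂μ).lt_or_eq with h | h
      · exact h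
      · exfalso
        apply hne
        have hAz : ∫ x, ‖f x‖ ^ p ∂μ = 0 := le_antisymm (by linarith) hA0
        have hBz : ∫ x, ‖g x‖ ^ p ∂μ = 0 := by linarith
        constructor
        · have h' := (integral_eq_zero_iff_of_nonneg
            (fun x => Real.rpow_nonneg (norm_nonneg _) _) hfi).mp hAz
          filter_upwards [h'] with x hx
          have hx' : ‖f x‖ ^ p = 0 := hx
          have h'' := (Real.rpow_eq_zero_iff_of_nonneg (norm_nonneg (f x))).mp hx'
          simpa using norm_eq_zero.mp h''.1
        · have h' := (integral_eq_zero_iff_of_nonneg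
            (fun x => Real.rpow_nonneg (norm_nonneg _) _) hgi).mp hBz
          filter_upwards [h'] with x hx
          have hx' : ‖g x‖ ^ p = 0 := hx
          have h'' := (Real.rpow_eq_zero_iff_of_nonneg (norm_nonneg (g x))).mp hx'
          simpa using norm_eq_zero.mp h''.1
    have hstep : (∫ x, φ x ^ (1 / (p - 1)) ∂μ) ^ (1 / (1 / (p - 1)))
        ≤ (∫ x, ‖‖g x‖ ^ (p - 2) • g x - ‖f x‖ ^ (p - 2) • f x‖ ^ q ∂μ) ^ (p - 1) := by
      rw [one_div_one_div]
      refine Real.rpow_le_rpow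
        (integral_nonneg fun x => Real.rpow_nonneg (hφ0 x) _) ?_ hp1'.le
      refine integral_mono hφri hHi fun x => ?_
      rw [hφr x]
      exact Real.rpow_le_rpow (hbase0 x) (hpt x) hq0.le
    have hψint : ∫ x, ψ x ^ (1 / (2 - p)) ∂μ
        = (∫ x, ‖f x‖ ^ p ∂μ) + ∫ x, ‖g x‖ ^ p ∂μ := by
      rw [show (fun x => ψ x ^ (1 / (2 - p)))
        = fun x => ‖f x‖ ^ p + ‖g x‖ ^ p from funext hψr]
      exact integral_add hfi hgi
    have hmain : c0 ^ p * ∫ x, ‖g x - f x‖ ^ p ∂μ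
        ≤ (∫ x, ‖‖g x‖ ^ (p - 2) • g x - ‖f x‖ ^ (p - 2) • f x‖ ^ q ∂μ) ^ (p - 1)
          * ((∫ x, ‖f x‖ ^ p ∂μ) + ∫ x, ‖g x‖ ^ p ∂μ) ^ (2 - p) := by
      calc c0 ^ p * ∫ x, ‖g x - f x‖ ^ p ∂μ = ∫ x, φ x * ψ x ∂μ := hL.symm
        _ ≤ (∫ x, φ x ^ (1 / (p - 1)) ∂μ) ^ (1 / (1 / (p - 1)))
            * (∫ x, ψ x ^ (1 / (2 - p)) ∂μ) ^ (1 / (1 / (2 - p))) := holder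
        _ ≤ _ := by
            rw [hψint, show (1:ℝ) / (1 / (2 - p)) = 2 - p from one_div_one_div _]
            exact mul_le_mul_of_nonneg_right hstep (Real.rpow_nonneg hT.le _)
    apply (Real.rpow_le_rpow_iff (by positivity)
      (Real.rpow_nonneg hH0 _) hp0).mp
    have hXp : (c0 * ((∫ x, ‖f x‖ ^ p ∂μ) + ∫ x, ‖g x‖ ^ p ∂μ) ^ ((p - 2) / p)
        * (∫ x, ‖g x - f x‖ ^ p ∂μ) ^ (1 / p)) ^ p
        = c0 ^ p * ((∫ x, ‖f x‖ ^ p ∂μ) + ∫ x, ‖g x‖ ^ p ∂μ) ^ (p - 2)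
          * ∫ x, ‖g x - f x‖ ^ p ∂μ := by
      rw [Real.mul_rpow (by positivity) (Real.rpow_nonneg hDp0 _),
        Real.mul_rpow hc0.le (Real.rpow_nonneg hT.le _),
        ← Real.rpow_mul hT.le, ← Real.rpow_mul hDp0,
        show (p - 2) / p * p = p - 2 by field_simp,
        show 1 / p * p = 1 by field_simp, Real.rpow_one]
    have hYp : ((∫ x, ‖‖g x‖ ^ (p - 2) • g x - ‖f x‖ ^ (p - 2) • f x‖ ^ q ∂μ)
        ^ (1 / q)) ^ p
        = (∫ x, ‖‖g x‖ ^ (p - 2) • g x - ‖f x‖ ^ (p - 2) • f x‖ ^ q ∂μ) ^ (p - 1) := by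
      rw [← Real.rpow_mul hH0, show 1 / q * p = p - 1 by
        rw [hqdef, one_div_div]
        field_simp]
    rw [hXp, hYp]
    calc c0 ^ p * ((∫ x, ‖f x‖ ^ p ∂μ) + ∫ x, ‖g x‖ ^ p ∂μ) ^ (p - 2)
          * ∫ x, ‖g x - f x‖ ^ p ∂μ
        = (c0 ^ p * ∫ x, ‖g x - f x‖ ^ p ∂μ)
          * ((∫ x, ‖f x‖ ^ p ∂μ) + ∫ x, ‖g x‖ ^ p ∂μ) ^ (p - 2) := by ring
      _ ≤ ((∫ x, ‖‖g x‖ ^ (p - 2) • g x - ‖f x‖ ^ (p - 2) • f x‖ ^ q ∂μ) ^ (p - 1)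
          * ((∫ x, ‖f x‖ ^ p ∂μ) + ∫ x, ‖g x‖ ^ p ∂μ) ^ (2 - p))
          * ((∫ x, ‖f x‖ ^ p ∂μ) + ∫ x, ‖g x‖ ^ p ∂μ) ^ (p - 2) :=
          mul_le_mul_of_nonneg_right hmain (Real.rpow_nonneg hT.le _)
      _ = (∫ x, ‖‖g x‖ ^ (p - 2) • g x - ‖f x‖ ^ (p - 2) • f x‖ ^ q ∂μ) ^ (p - 1) := by
          rw [mul_assoc, ← Real.rpow_add hT, show 2 - p + (p - 2) = 0 by ring,
            Real.rpow_zero, mul_one]
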